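/- arXiv:1504.02658 — 3 statements merged into one kernel-verified Lean document; each statement's English description precedes it below -/
import Mathlib

section
/- The mean–semideviation risk measure ρ(X) = E[X] + κ·‖(X − E[X])₊‖_p with κ ∈ [0,1], p ≥ 1, is subadditive: ρ(X + Y) ≤ ρ(X) + ρ(Y) for X, Y ∈ L^p. -/
open MeasureTheory

/-- Minkowski-type inequality for real nonnegative functions with a pointwise bound. -/
lemma minkowski_aux {Ω : Type*} [MeasureSpace Ω]
    (p : ℝ) (hp : 1 ≤ p) (f g h : Ω → ℝ)
    (hf0 : ∀ ω, 0 ≤ f ω) (hg0 : ∀ ω, 0 ≤ g ω) (hh0 : ∀ ω, 0 ≤ h ω)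
    (hle : ∀ ω, h ω ≤ f ω + g ω)
    (hfm : AEMeasurable f) (hgm : AEMeasurable g) (hhm : AEMeasurable h)
    (hfi : Integrable (fun ω => f ω ^ p)) (hgi : Integrable (fun ω => g ω ^ p)) :
    (∫ ω, h ω ^ p) ^ (1/p) ≤ (∫ ω, f ω ^ p) ^ (1/p) + (∫ ω, g ω ^ p) ^ (1/p) := by
  have hp0 : 0 ≤ p := le_trans zero_le_one hp
  set F : Ω → ENNReal := fun ω => ENNReal.ofReal (f ω)
  set G : Ω → ENNReal := fun ω => ENNReal.ofReal (g ω)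
  set H : Ω → ENNReal := fun ω => ENNReal.ofReal (h ω)
  have hFm : AEMeasurable F := hfm.ennreal_ofReal
  have hGm : AEMeasurable G := hgm.ennreal_ofReal
  -- rewrite each real integral as a lintegral
  have key : ∀ (u : Ω → ℝ), (∀ ω, 0 ≤ u ω) → AEMeasurable u →
      (∫ ω, u ω ^ p) = (∫⁻ ω, (ENNReal.ofReal (u ω)) ^ p).toReal := by
    intro u hu0 hum
    rw [integral_eq_lintegral_of_nonneg_ae
      (Filter.Eventually.of_forall fun ω => Real.rpow_nonneg (hu0 ω) p)
      (((Real.continuous_rpow_const hp0).measurable.comp_aemeasurable hum).aestronglyMeasurable)]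
    congr 1
    apply lintegral_congr
    intro ω
    exact (ENNReal.ofReal_rpow_of_nonneg (hu0 ω) hp0).symm
  rw [key f hf0 hfm, key g hg0 hgm, key h hh0 hhm]
  -- finiteness
  have hFfin : (∫⁻ ω, F ω ^ p) ≠ ⊤ := by
    have := hfi.hasFiniteIntegral
    rw [hasFiniteIntegral_iff_norm] at this
    refine ne_of_lt (lt_of_le_of_lt (le_of_eq ?_) this)
    apply lintegral_congr
    intro ω
    rw [ENNReal.ofReal_rpow_of_nonneg (hf0 ω) hp0, Real.norm_eq_abs,
      abs_of_nonneg (Real.rpow_nonneg (hf0 ω) p)]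
  have hGfin : (∫⁻ ω, G ω ^ p) ≠ ⊤ := by
    have := hgi.hasFiniteIntegral
    rw [hasFiniteIntegral_iff_norm] at this
    refine ne_of_lt (lt_of_le_of_lt (le_of_eq ?_) this)
    apply lintegral_congr
    intro ω
    rw [ENNReal.ofReal_rpow_of_nonneg (hg0 ω) hp0, Real.norm_eq_abs,
      abs_of_nonneg (Real.rpow_nonneg (hg0 ω) p)]
  -- Minkowski in ENNReal
  have hmink : (∫⁻ ω, H ω ^ p) ^ (1/p) ≤
      (∫⁻ ω, F ω ^ p) ^ (1/p) + (∫⁻ ω, G ω ^ p) ^ (1/p) := by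
    refine le_trans ?_ (ENNReal.lintegral_Lp_add_le hFm hGm hp)
    apply ENNReal.rpow_le_rpow _ (by positivity)
    apply lintegral_mono
    intro ω
    apply ENNReal.rpow_le_rpow _ hp0
    calc H ω ≤ ENNReal.ofReal (f ω + g ω) := ENNReal.ofReal_le_ofReal (hle ω)
      _ = F ω + G ω := ENNReal.ofReal_add (hf0 ω) (hg0 ω)
  -- pass to reals
  have h1 : ((∫⁻ ω, H ω ^ p) ^ (1/p)).toReal ≤
      ((∫⁻ ω, F ω ^ p) ^ (1/p) + (∫⁻ ω, G ω ^ p) ^ (1/p)).toReal := by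
    apply ENNReal.toReal_mono _ hmink
    apply ENNReal.add_ne_top.2
    constructor
    · exact ENNReal.rpow_ne_top_of_nonneg (by positivity) hFfin
    · exact ENNReal.rpow_ne_top_of_nonneg (by positivity) hGfin
  rw [ENNReal.toReal_add (ENNReal.rpow_ne_top_of_nonneg (by positivity) hFfin)
    (ENNReal.rpow_ne_top_of_nonneg (by positivity) hGfin)] at h1
  simpa [ENNReal.toReal_rpow] using h1

/-- Integrability of `max (X - c) 0 ^ p` from integrability of `|X| ^ p`. -/
lemma integrable_max_sub_rpow {Ω : Type*} [MeasureSpace Ω]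
    [IsProbabilityMeasure (volume : Measure Ω)]
    (p : ℝ) (hp : 1 ≤ p) (X : Ω → ℝ) (c : ℝ) (hX : Integrable X)
    (hXp : Integrable (fun ω => |X ω| ^ p)) :
    Integrable (fun ω => max (X ω - c) 0 ^ p) := by
  have hp0 : 0 ≤ p := le_trans zero_le_one hp
  have hmeas : AEMeasurable (fun ω => max (X ω - c) 0 ^ p) :=
    ((Real.continuous_rpow_const hp0).measurable.comp_aemeasurable
      ((hX.aemeasurable.sub aemeasurable_const).max aemeasurable_const))
  refine Integrable.mono' ((hXp.const_mul ((2:ℝ)^p)).add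
    (integrable_const (((2:ℝ)^p) * |c| ^ p))) hmeas.aestronglyMeasurable ?_
  filter_upwards with ω
  rw [Real.norm_eq_abs, abs_of_nonneg (Real.rpow_nonneg (le_max_right _ _) p)]
  have h1 : max (X ω - c) 0 ≤ 2 * max |X ω| |c| := by
    have := abs_sub_abs_le_abs_sub (X ω) c
    have h2 : |X ω - c| ≤ |X ω| + |c| := abs_sub (X ω) c
    have := le_max_left |X ω| |c|
    have := le_max_right |X ω| |c|
    have := le_abs_self (X ω - c)
    apply max_le <;> nlinarith [abs_nonneg (X ω), abs_nonneg c]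
  calc max (X ω - c) 0 ^ p ≤ (2 * max |X ω| |c|) ^ p :=
        Real.rpow_le_rpow (le_max_right _ _) h1 hp0
    _ = 2 ^ p * max |X ω| |c| ^ p := by
        rw [Real.mul_rpow (by norm_num) (le_max_of_le_left (abs_nonneg _))]
    _ ≤ 2 ^ p * (|X ω| ^ p + |c| ^ p) := by
        apply mul_le_mul_of_nonneg_left _ (Real.rpow_nonneg (by norm_num) p)
        rcases le_total |X ω| |c| with hc | hc
        · rw [max_eq_right hc]
          nlinarith [Real.rpow_nonneg (abs_nonneg (X ω)) p]
        · rw [max_eq_left hc]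
          nlinarith [Real.rpow_nonneg (abs_nonneg c) p]
    _ = 2 ^ p * |X ω| ^ p + 2 ^ p * |c| ^ p := by ring

theorem mean_semideviation_subadditive
    {Ω : Type*} [MeasureSpace Ω] [IsProbabilityMeasure (volume : Measure Ω)]
    (p κ : ℝ) (hp : 1 ≤ p) (hκ : κ ∈ Set.Icc (0:ℝ) 1)
    (X Y : Ω → ℝ) (hX : Integrable X) (hY : Integrable Y)
    (hXp : Integrable (fun ω => |X ω| ^ p))
    (hYp : Integrable (fun ω => |Y ω| ^ p)) :
    (∫ ω, (X ω + Y ω)) +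
        κ * (∫ ω, max ((X ω + Y ω) - ∫ ω', (X ω' + Y ω')) 0 ^ p) ^ (1/p) ≤
      ((∫ ω, X ω) + κ * (∫ ω, max (X ω - ∫ ω', X ω') 0 ^ p) ^ (1/p)) +
        ((∫ ω, Y ω) + κ * (∫ ω, max (Y ω - ∫ ω', Y ω') 0 ^ p) ^ (1/p)) := by
  have hint : (∫ ω, (X ω + Y ω)) = (∫ ω, X ω) + (∫ ω, Y ω) := integral_add hX hY
  set EX := ∫ ω, X ω
  set EY := ∫ ω, Y ω
  set f : Ω → ℝ := fun ω => max (X ω - EX) 0 with hf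
  set g : Ω → ℝ := fun ω => max (Y ω - EY) 0 with hg
  set h : Ω → ℝ := fun ω => max ((X ω + Y ω) - ∫ ω', (X ω' + Y ω')) 0 with hh
  have key : (∫ ω, h ω ^ p) ^ (1/p) ≤ (∫ ω, f ω ^ p) ^ (1/p) + (∫ ω, g ω ^ p) ^ (1/p) := by
    apply minkowski_aux p hp f g h
      (fun ω => le_max_right _ _) (fun ω => le_max_right _ _) (fun ω => le_max_right _ _)
    · intro ω
      simp only [hf, hg, hh, hint]
      apply max_le
      · have h1 := le_max_left (X ω - EX) 0
        have h2 := le_max_left (Y ω - EY) 0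
        linarith
      · have h1 := le_max_right (X ω - EX) 0
        have h2 := le_max_right (Y ω - EY) 0
        linarith
    · exact (hX.aemeasurable.sub aemeasurable_const).max aemeasurable_const
    · exact (hY.aemeasurable.sub aemeasurable_const).max aemeasurable_const
    · exact (((hX.add hY).aemeasurable.sub aemeasurable_const).max aemeasurable_const)
    · exact integrable_max_sub_rpow p hp X EX hX hXp
    · exact integrable_max_sub_rpow p hp Y EY hY hYp
  have hκ0 : 0 ≤ κ := hκ.1
  have := mul_le_mul_of_nonneg_left key hκ0
  rw [hint]
  simp only [hf, hg, hh] at this ⊢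
  rw [hint] at this
  linarith
end

section
/- Let v(h) = min_{z∈Z} f₁(z, h(z)) with Z compact, f₁ continuous and f₁(z, ·) differentiable with gradient ∇f₁ jointly continuous, and suppose the minimizer set at h̄ is a singleton {ẑ}. Then v is Hadamard directionally differentiable at h̄ ∈ C(Z) and v′(h̄; d) = ⟨∇f₁(ẑ, h̄(ẑ)), d(ẑ)⟩ for every direction d ∈ C(Z). -/
open Filter Topology Set

lemma mvt_slope {E : Type*} [NormedAddCommGroup E] [InnerProductSpace ℝ E]
    (f : E → ℝ) (f' : E → E) (hf : ∀ y, HasFDerivAt f (innerSL ℝ (f' y)) y)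
    (y w : E) {t : ℝ} (ht : 0 < t) :
    ∃ c ∈ Set.Ioo (0:ℝ) t,
      (f (y + t • w) - f y) / t = inner ℝ (f' (y + c • w)) w := by
  set g : ℝ → ℝ := fun τ => f (y + τ • w) with hg
  have hγ : ∀ τ : ℝ, HasDerivAt (fun τ : ℝ => y + τ • w) w τ := fun τ => by
    simpa using ((hasDerivAt_id τ).smul_const w).const_add y
  have hgd : ∀ τ : ℝ, HasDerivAt g (inner ℝ (f' (y + τ • w)) w : ℝ) τ := fun τ => by
    exact (hf (y + τ • w)).comp_hasDerivAt τ (hγ τ)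
  obtain ⟨c, hc, hceq⟩ := exists_hasDerivAt_eq_slope g
      (fun τ => (inner ℝ (f' (y + τ • w)) w : ℝ)) ht
      (fun τ _ => (hgd τ).continuousAt.continuousWithinAt)
      (fun τ _ => hgd τ)
  refine ⟨c, hc, ?_⟩
  rw [hceq]
  simp [hg]

theorem optimal_value_hadamard_derivative
    {Z : Type*} [MetricSpace Z] [CompactSpace Z] [Nonempty Z] (s : ℕ)
    (f₁ : Z → EuclideanSpace ℝ (Fin s) → ℝ)
    (hcont : Continuous (fun q : Z × EuclideanSpace ℝ (Fin s) => f₁ q.1 q.2))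
    (f₁' : Z → EuclideanSpace ℝ (Fin s) → EuclideanSpace ℝ (Fin s))
    (hdiff : ∀ (z : Z) (y : EuclideanSpace ℝ (Fin s)),
      HasFDerivAt (f₁ z) (innerSL ℝ (f₁' z y)) y)
    (hgradcont : Continuous
      (fun q : Z × EuclideanSpace ℝ (Fin s) => f₁' q.1 q.2))
    (hbar : C(Z, EuclideanSpace ℝ (Fin s))) (zhat : Z)
    (hunique : {z : Z | f₁ z (hbar z) = ⨅ z' : Z, f₁ z' (hbar z')} = {zhat})
    (d : C(Z, EuclideanSpace ℝ (Fin s)))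
    (t : ℕ → ℝ) (ht : ∀ n, 0 < t n) (ht0 : Tendsto t atTop (𝓝 0))
    (dseq : ℕ → C(Z, EuclideanSpace ℝ (Fin s)))
    (hd : Tendsto dseq atTop (𝓝 d)) :
    Tendsto
      (fun n =>
        ((⨅ z : Z, f₁ z ((hbar + t n • dseq n) z)) - ⨅ z : Z, f₁ z (hbar z))
          / t n)
      atTop (𝓝 (inner ℝ (f₁' zhat (hbar zhat)) (d zhat) : ℝ)) := by
  set hs : ℕ → C(Z, EuclideanSpace ℝ (Fin s)) := fun n => hbar + t n • dseq n with hhs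
  -- continuity of z ↦ f₁ z (h z)
  have hφc : ∀ h : C(Z, EuclideanSpace ℝ (Fin s)), Continuous fun z => f₁ z (h z) := fun h =>
    hcont.comp (continuous_id.prodMk h.continuous)
  -- existence of minimizers
  have hex : ∀ h : C(Z, EuclideanSpace ℝ (Fin s)), ∃ z : Z, ∀ z', f₁ z (h z) ≤ f₁ z' (h z') := by
    intro h
    obtain ⟨z, -, hz⟩ := isCompact_univ.exists_isMinOn univ_nonempty
      (hφc h).continuousOn
    exact ⟨z, fun z' => hz (mem_univ z')⟩
  choose zmin hzmin using hex
  have hbdd : ∀ h : C(Z, EuclideanSpace ℝ (Fin s)), BddBelow (Set.range fun z => f₁ z (h z)) := by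
    rintro h
    exact ⟨f₁ (zmin h) (h (zmin h)), by rintro _ ⟨z, rfl⟩; exact hzmin h z⟩
  have hinf_eq : ∀ h : C(Z, EuclideanSpace ℝ (Fin s)), (⨅ z : Z, f₁ z (h z)) = f₁ (zmin h) (h (zmin h)) :=
    fun h => le_antisymm (ciInf_le (hbdd h) (zmin h)) (le_ciInf (hzmin h))
  -- properties at hbar
  have hzhat_mem : f₁ zhat (hbar zhat) = ⨅ z' : Z, f₁ z' (hbar z') := by
    have : zhat ∈ ({zhat} : Set Z) := rfl
    rw [← hunique] at this; exact this
  have hzhat_min : ∀ z, f₁ zhat (hbar zhat) ≤ f₁ z (hbar z) := fun z => by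
    rw [hzhat_mem]; exact ciInf_le (hbdd hbar) z
  set zn : ℕ → Z := fun n => zmin (hs n) with hzn
  -- convergence of hs to hbar in C(Z,E)
  have hts : Tendsto hs atTop (𝓝 hbar) := by
    have : Tendsto (fun n => t n • dseq n) atTop (𝓝 ((0:ℝ) • d)) := ht0.smul hd
    have h1 : Tendsto (fun n => hbar + t n • dseq n) atTop (𝓝 (hbar + (0:ℝ) • d)) :=
      tendsto_const_nhds.add this
    rw [zero_smul ℝ d, add_zero] at h1
    exact h1
  -- evaluation continuity
  have heval : Continuous fun p : C(Z, EuclideanSpace ℝ (Fin s)) × Z => p.1 p.2 := continuous_eval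
  -- zn → zhat
  have hznt : Tendsto zn atTop (𝓝 zhat) := by
    by_contra hcon
    obtain ⟨U, hU, hfreq⟩ := not_tendsto_iff_exists_frequently_notMem.mp hcon
    obtain ⟨φ, hφ, hφU⟩ := extraction_of_frequently_atTop hfreq
    obtain ⟨zs, -, ψ, hψ, hψt⟩ := isCompact_univ.tendsto_subseq
      (fun k => mem_univ (zn (φ k)))
    have hφψ : Tendsto (φ ∘ ψ) atTop atTop :=
      (hφ.comp hψ).tendsto_atTop
    have hhs' : Tendsto (fun k => hs (φ (ψ k))) atTop (𝓝 hbar) := hts.comp hφψ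
    -- zs is a minimizer
    have hzs : ∀ z, f₁ zs (hbar zs) ≤ f₁ z (hbar z) := by
      intro z
      have h1 : Tendsto (fun k => f₁ (zn (φ (ψ k))) (hs (φ (ψ k)) (zn (φ (ψ k)))))
          atTop (𝓝 (f₁ zs (hbar zs))) := by
        have hev : Tendsto (fun k => hs (φ (ψ k)) (zn (φ (ψ k)))) atTop (𝓝 (hbar zs)) :=
          (heval.tendsto (hbar, zs)).comp (hhs'.prodMk_nhds hψt)
        exact (hcont.tendsto (zs, hbar zs)).comp (hψt.prodMk_nhds hev)
      have h2 : Tendsto (fun k => f₁ z (hs (φ (ψ k)) z)) atTop (𝓝 (f₁ z (hbar z))) := by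
        have hev : Tendsto (fun k => hs (φ (ψ k)) z) atTop (𝓝 (hbar z)) :=
          (heval.tendsto (hbar, z)).comp (hhs'.prodMk_nhds tendsto_const_nhds)
        exact (hcont.tendsto (z, hbar z)).comp (tendsto_const_nhds.prodMk_nhds hev)
      exact le_of_tendsto_of_tendsto' h1 h2 fun k => hzmin _ z
    have hzseq : zs = zhat := by
      have : zs ∈ {z : Z | f₁ z (hbar z) = ⨅ z' : Z, f₁ z' (hbar z')} := by
        rw [Set.mem_setOf_eq]
        exact le_antisymm (le_ciInf hzs) (ciInf_le (hbdd hbar) zs)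
      rw [hunique] at this; exact this
    rw [hzseq] at hψt
    obtain ⟨k, hk⟩ := (hψt.eventually (eventually_mem_nhds_iff.mpr hU)).exists
    exact hφU (ψ k) (mem_of_mem_nhds hk)
  -- mean value theorem pointwise
  have hmvt : ∀ (n : ℕ) (z : Z), ∃ c ∈ Set.Ioo (0:ℝ) (t n),
      (f₁ z (hs n z) - f₁ z (hbar z)) / t n
        = inner ℝ (f₁' z (hbar z + c • dseq n z)) (dseq n z) := by
    intro n z
    obtain ⟨c, hc, hceq⟩ := mvt_slope (f₁ z) (f₁' z) (hdiff z) (hbar z) (dseq n z) (ht n)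
    refine ⟨c, hc, ?_⟩
    have happ : hs n z = hbar z + t n • dseq n z := by
      simp [hhs]
    rw [happ]
    exact hceq
  choose cU hcU hcUeq using fun n => hmvt n zhat
  choose cL hcL hcLeq using fun n => hmvt n (zn n)
  -- the common limit of the two inner-product sequences
  have hnorm_d : Tendsto (fun n => ‖dseq n‖) atTop (𝓝 ‖d‖) :=
    (continuous_norm.tendsto d).comp hd
  have hkey : ∀ (c : ℕ → ℝ), (∀ n, c n ∈ Set.Ioo (0:ℝ) (t n)) →
      ∀ (z : ℕ → Z), Tendsto z atTop (𝓝 zhat) →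
      Tendsto (fun n => (inner ℝ (f₁' (z n) (hbar (z n) + c n • dseq n (z n)))
          (dseq n (z n)) : ℝ)) atTop
        (𝓝 (inner ℝ (f₁' zhat (hbar zhat)) (d zhat) : ℝ)) := by
    intro c hc z hz
    have hw : Tendsto (fun n => dseq n (z n)) atTop (𝓝 (d zhat)) :=
      (heval.tendsto (d, zhat)).comp (hd.prodMk_nhds hz)
    have hcw : Tendsto (fun n => c n • dseq n (z n)) atTop
        (𝓝 (0 : EuclideanSpace ℝ (Fin s))) := by
      apply squeeze_zero_norm (a := fun n => t n * ‖dseq n‖)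
      · intro n
        rw [norm_smul]
        apply mul_le_mul (le_of_lt (abs_lt.mpr ⟨by linarith [(hc n).1, ht n], (hc n).2⟩))
          ((dseq n).norm_coe_le_norm (z n)) (norm_nonneg _) (le_of_lt (ht n))
      · have := ht0.mul hnorm_d
        rw [zero_mul] at this
        exact this
    have hy : Tendsto (fun n => hbar (z n) + c n • dseq n (z n)) atTop
        (𝓝 (hbar zhat)) := by
      have h1 := ((hbar.continuous.tendsto zhat).comp hz).add hcw
      rw [add_zero] at h1
      exact h1
    have hgrad : Tendsto (fun n => f₁' (z n) (hbar (z n) + c n • dseq n (z n)))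
        atTop (𝓝 (f₁' zhat (hbar zhat))) :=
      (hgradcont.tendsto (zhat, hbar zhat)).comp (hz.prodMk_nhds hy)
    exact hgrad.inner hw
  have hL := hkey cL hcL zn hznt
  have hU' := hkey cU hcU (fun _ => zhat) tendsto_const_nhds
  refine tendsto_of_tendsto_of_tendsto_of_le_of_le hL hU' ?_ ?_
  · intro n
    show (inner ℝ (f₁' (zn n) (hbar (zn n) + cL n • (dseq n) (zn n)))
        ((dseq n) (zn n)) : ℝ)
      ≤ ((⨅ z : Z, f₁ z (hs n z)) - ⨅ z : Z, f₁ z (hbar z)) / t n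
    rw [← hcLeq n]
    apply (div_le_div_iff_of_pos_right (ht n)).mpr
    have h1 : (⨅ z : Z, f₁ z (hs n z)) = f₁ (zn n) (hs n (zn n)) := hinf_eq (hs n)
    have h2 : (⨅ z : Z, f₁ z (hbar z)) ≤ f₁ (zn n) (hbar (zn n)) :=
      ciInf_le (hbdd hbar) (zn n)
    rw [h1]
    exact sub_le_sub le_rfl h2
  · intro n
    show ((⨅ z : Z, f₁ z (hs n z)) - ⨅ z : Z, f₁ z (hbar z)) / t n
      ≤ (inner ℝ (f₁' zhat (hbar zhat + cU n • (dseq n) zhat)) ((dseq n) zhat) : ℝ)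
    rw [← hcUeq n]
    apply (div_le_div_iff_of_pos_right (ht n)).mpr
    have h1 : (⨅ z : Z, f₁ z (hs n z)) ≤ f₁ zhat (hs n zhat) :=
      ciInf_le (hbdd (hs n)) zhat
    have h2 : f₁ zhat (hbar zhat) ≤ ⨅ z : Z, f₁ z (hbar z) := le_of_eq hzhat_mem
    exact sub_le_sub h1 h2
end

section
/- If X ≤ Y almost surely and p ≥ 1, κ ∈ [0,1], then the mean–semideviation risk measure is monotone on bounded random variables: ρ(X) = E[X] + κ‖(X − E[X])₊‖_p ≤ E[Y] + κ‖(Y − E[Y])₊‖_p = ρ(Y), provided κ ≤ 1. -/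
open MeasureTheory

theorem mean_semideviation_monotone_bounded
    {Ω : Type*} [MeasureSpace Ω] [IsProbabilityMeasure (volume : Measure Ω)]
    (p κ : ℝ) (hp : 1 ≤ p) (hκ : κ ∈ Set.Icc (0:ℝ) 1)
    (X Y : Ω → ℝ)
    (hXm : AEStronglyMeasurable X volume) (hYm : AEStronglyMeasurable Y volume)
    (hXb : ∃ C : ℝ, ∀ᵐ ω, |X ω| ≤ C) (hYb : ∃ C : ℝ, ∀ᵐ ω, |Y ω| ≤ C)
    (hXY : ∀ᵐ ω, X ω ≤ Y ω) :
    (∫ ω, X ω) + κ * (∫ ω, max (X ω - ∫ ω', X ω') 0 ^ p) ^ (1/p) ≤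
      (∫ ω, Y ω) + κ * (∫ ω, max (Y ω - ∫ ω', Y ω') 0 ^ p) ^ (1/p) := by
  obtain ⟨CX, hCX⟩ := hXb
  obtain ⟨CY, hCY⟩ := hYb
  have hp0 : 0 < p := lt_of_lt_of_le one_pos hp
  -- integrability of X and Y
  have hXtop : MemLp X ⊤ volume :=
    memLp_top_of_bound hXm CX (hCX.mono fun ω h => by simpa [Real.norm_eq_abs] using h)
  have hYtop : MemLp Y ⊤ volume :=
    memLp_top_of_bound hYm CY (hCY.mono fun ω h => by simpa [Real.norm_eq_abs] using h)
  have hXi : Integrable X volume :=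
    memLp_one_iff_integrable.mp (hXtop.mono_exponent le_top)
  have hYi : Integrable Y volume :=
    memLp_one_iff_integrable.mp (hYtop.mono_exponent le_top)
  set mX := ∫ ω, X ω with hmX
  set mY := ∫ ω, Y ω with hmY
  have hm : mX ≤ mY := integral_mono_ae hXi hYi hXY
  set c := mY - mX with hc
  have hc0 : 0 ≤ c := by simp [hc]; linarith
  set f := fun ω => max (X ω - mX) 0 with hf
  set g := fun ω => max (Y ω - mY) 0 with hg
  have hf0 : ∀ ω, 0 ≤ f ω := fun ω => le_max_right _ _
  have hg0 : ∀ ω, 0 ≤ g ω := fun ω => le_max_right _ _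
  have hfm : AEStronglyMeasurable f volume :=
    ((hXm.aemeasurable.sub aemeasurable_const).max aemeasurable_const).aestronglyMeasurable
  have hgm : AEStronglyMeasurable g volume :=
    ((hYm.aemeasurable.sub aemeasurable_const).max aemeasurable_const).aestronglyMeasurable
  set q : ENNReal := ENNReal.ofReal p with hqdef
  have hq0 : q ≠ 0 := by
    simp [hqdef, ENNReal.ofReal_eq_zero]; linarith
  have hqtop : q ≠ ⊤ := ENNReal.ofReal_ne_top
  have hq1 : (1 : ENNReal) ≤ q := by
    rw [hqdef, ← ENNReal.ofReal_one]
    exact ENNReal.ofReal_le_ofReal hp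
  have hqp : q.toReal = p := ENNReal.toReal_ofReal hp0.le
  -- MemLp of f, g, const
  have hftop : MemLp f ⊤ volume :=
    memLp_top_of_bound hfm (max (CX + |mX|) 0)
      (hCX.mono fun ω h => by
        rw [Real.norm_eq_abs, abs_of_nonneg (hf0 ω)]
        rcases le_total (X ω - mX) 0 with h'|h'
        · simp [hf, max_eq_right h']
        · rw [hf]; simp only
          rw [max_eq_left h']
          have := abs_le.mp h
          have := abs_nonneg mX
          have := le_abs_self mX
          have := neg_abs_le mX
          refine le_trans ?_ (le_max_left _ _)
          linarith)
  have hgtop : MemLp g ⊤ volume :=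
    memLp_top_of_bound hgm (max (CY + |mY|) 0)
      (hCY.mono fun ω h => by
        rw [Real.norm_eq_abs, abs_of_nonneg (hg0 ω)]
        rcases le_total (Y ω - mY) 0 with h'|h'
        · simp [hg, max_eq_right h']
        · rw [hg]; simp only
          rw [max_eq_left h']
          have := abs_le.mp h
          have := le_abs_self mY
          have := neg_abs_le mY
          refine le_trans ?_ (le_max_left _ _)
          linarith)
  have hfq : MemLp f q volume := hftop.mono_exponent le_top
  have hgq : MemLp g q volume := hgtop.mono_exponent le_top
  have hgcq : MemLp (fun ω => g ω + c) q volume := hgq.add (memLp_const c)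
  -- pointwise inequality f ≤ g + c a.e.
  have hfgc : ∀ᵐ ω, f ω ≤ g ω + c := by
    filter_upwards [hXY] with ω h
    rw [hf, hg]
    simp only
    rcases le_total (X ω - mX) 0 with h'|h'
    · rw [max_eq_right h']
      positivity
    · rw [max_eq_left h']
      rcases le_total (Y ω - mY) 0 with h''|h''
      · rw [max_eq_right h'']
        simp [hc]; linarith
      · rw [max_eq_left h'']
        simp [hc]; linarith
  -- eLpNorm inequality
  have h1 : eLpNorm f q volume ≤ eLpNorm (fun ω => g ω + c) q volume := by
    refine eLpNorm_mono_ae ?_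
    filter_upwards [hfgc] with ω h
    rw [Real.norm_eq_abs, Real.norm_eq_abs, abs_of_nonneg (hf0 ω),
      abs_of_nonneg (by have := hg0 ω; linarith)]
    exact h
  have h2 : eLpNorm (fun ω => g ω + c) q volume ≤ eLpNorm g q volume + ENNReal.ofReal c := by
    have := eLpNorm_add_le hgm (aestronglyMeasurable_const (b := c)) hq1
    refine le_trans this ?_
    gcongr
    rw [eLpNorm_const c hq0 (by simp [NeZero.ne])]
    simp only [Real.enorm_of_nonneg hc0]
    simp [ENNReal.ofReal]
  -- convert eLpNorm to integrals
  have key : ∀ (h : Ω → ℝ), (∀ ω, 0 ≤ h ω) → MemLp h q volume →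
      eLpNorm h q volume = ENNReal.ofReal ((∫ ω, h ω ^ p) ^ (1/p)) := by
    intro h hpos hmem
    rw [hmem.eLpNorm_eq_integral_rpow_norm hq0 hqtop, hqp, one_div]
    congr 2
    refine integral_congr_ae (Filter.Eventually.of_forall fun ω => ?_)
    simp only
    rw [Real.norm_eq_abs, abs_of_nonneg (hpos ω)]
  have hNf := key f hf0 hfq
  have hNg := key g hg0 hgq
  set Nf := (∫ ω, f ω ^ p) ^ (1/p) with hNfdef
  set Ng := (∫ ω, g ω ^ p) ^ (1/p) with hNgdef
  have hNf0 : 0 ≤ Nf := by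
    rw [hNfdef]
    positivity
  have hNg0 : 0 ≤ Ng := by
    rw [hNgdef]
    positivity
  have hmain : Nf ≤ Ng + c := by
    have : ENNReal.ofReal Nf ≤ ENNReal.ofReal Ng + ENNReal.ofReal c := by
      rw [← hNf, ← hNg]
      exact le_trans h1 h2
    rw [← ENNReal.ofReal_add hNg0 hc0] at this
    exact (ENNReal.ofReal_le_ofReal_iff (by linarith)).mp this
  obtain ⟨hκ0, hκ1⟩ := hκ
  have hκc : κ * c ≤ c := by nlinarith
  show mX + κ * Nf ≤ mY + κ * Ng
  nlinarith
end
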